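/- Under exclusion/independence, for any function h : Z → ℝ with E[h(Z)] = 0, the covariance identities hold: E[Y·D·h(Z)] = ∑_g P(G = g) E[Y(1) | G = g] E[D_g(Z) h(Z)], E[Y·(1−D)·h(Z)] = −∑_g P(G = g) E[Y(0) | G = g] E[D_g(Z) h(Z)], and hence E[Y·h(Z)] = ∑_g P(G = g) E[D_g(Z) h(Z)] Δ_g, where Δ_g = E[Y(1) − Y(0) | G = g]. -/

import Mathlib

open MeasureTheory ProbabilityTheory

/-- Covariance identities under exclusion/independence: for any `h` with `E[h(Z)] = 0`,
`E[Y·D·h(Z)] = ∑_g P(G=g)·E[Y(1)|G=g]·E[D_g(Z)h(Z)]`,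
`E[Y·(1−D)·h(Z)] = −∑_g P(G=g)·E[Y(0)|G=g]·E[D_g(Z)h(Z)]`, and
`E[Y·h(Z)] = ∑_g P(G=g)·E[D_g(Z)h(Z)]·Δ_g`, where `P(G=g)·E[V|G=g]` is written as the
set integral `∫_{G=g} V`. -/
theorem stmt10 {Ω : Type*} [MeasurableSpace Ω] (μ : Measure Ω) [IsProbabilityMeasure μ]
    {ζ γ : Type*} [MeasurableSpace ζ] [MeasurableSpace γ]
    [Fintype ζ] [Fintype γ] [MeasurableSingletonClass ζ] [MeasurableSingletonClass γ]
    (Z : Ω → ζ) (G : Ω → γ) (hZm : Measurable Z) (hGm : Measurable G)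
    (Dg : γ → ζ → ℝ) (hDg01 : ∀ g z, Dg g z = 0 ∨ Dg g z = 1)
    (Y1 Y0 : Ω → ℝ) (hY1m : Measurable Y1) (hY0m : Measurable Y0)
    (hY1i : Integrable Y1 μ) (hY0i : Integrable Y0 μ)
    (hindep : IndepFun (fun ω => (Y1 ω, Y0 ω, G ω)) Z μ)
    (h : ζ → ℝ) (hmean : ∫ ω, h (Z ω) ∂μ = 0) :
    (∫ ω, (Dg (G ω) (Z ω) * Y1 ω + (1 - Dg (G ω) (Z ω)) * Y0 ω) *
        Dg (G ω) (Z ω) * h (Z ω) ∂μ =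
      ∑ g, (∫ ω in {ω | G ω = g}, Y1 ω ∂μ) * ∫ ω, Dg g (Z ω) * h (Z ω) ∂μ) ∧
    (∫ ω, (Dg (G ω) (Z ω) * Y1 ω + (1 - Dg (G ω) (Z ω)) * Y0 ω) *
        (1 - Dg (G ω) (Z ω)) * h (Z ω) ∂μ =
      -∑ g, (∫ ω in {ω | G ω = g}, Y0 ω ∂μ) * ∫ ω, Dg g (Z ω) * h (Z ω) ∂μ) ∧
    (∫ ω, (Dg (G ω) (Z ω) * Y1 ω + (1 - Dg (G ω) (Z ω)) * Y0 ω) * h (Z ω) ∂μ =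
      ∑ g, (∫ ω, Dg g (Z ω) * h (Z ω) ∂μ) *
        ∫ ω in {ω | G ω = g}, (Y1 ω - Y0 ω) ∂μ) := by
  classical
  -- basic measurability facts
  have hφm : ∀ φ : ζ → ℝ, Measurable fun ω => φ (Z ω) :=
    fun φ => (measurable_of_countable φ).comp hZm
  -- boundedness of φ ∘ Z
  have hφb : ∀ φ : ζ → ℝ, ∃ C, ∀ ω, ‖φ (Z ω)‖ ≤ C := by
    intro φ
    refine ⟨∑ z, ‖φ z‖, fun ω => ?_⟩
    exact Finset.single_le_sum (f := fun z => ‖φ z‖) (fun _ _ => norm_nonneg _) (Finset.mem_univ _)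
  -- integrability of V * φ(Z)
  have hmul : ∀ (V : Ω → ℝ), Integrable V μ → ∀ φ : ζ → ℝ,
      Integrable (fun ω => V ω * φ (Z ω)) μ := by
    intro V hVi φ
    have := hVi.bdd_mul (hφm φ).aestronglyMeasurable (ae_of_all _ (hφb φ).choose_spec)
    exact this.congr (ae_of_all _ fun ω => mul_comm _ _)
  have hφi : ∀ φ : ζ → ℝ, Integrable (fun ω => φ (Z ω)) μ := by
    intro φ
    have := hmul (fun _ => (1:ℝ)) (integrable_const 1) φ
    simpa using this
  -- the key covariance lemma
  have key : ∀ (V : Ω → ℝ), Measurable V → Integrable V μ →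
      IndepFun (fun ω => (V ω, G ω)) Z μ → ∀ (φ : ζ → ℝ) (g : γ),
      ∫ ω, (if G ω = g then V ω else 0) * φ (Z ω) ∂μ =
        (∫ ω in {ω | G ω = g}, V ω ∂μ) * ∫ ω, φ (Z ω) ∂μ := by
    intro V hVm hVi hVG φ g
    have hs : MeasurableSet {ω | G ω = g} := hGm (measurableSet_singleton g)
    have hF : Measurable (fun p : ℝ × γ => if p.2 = g then p.1 else 0) :=
      Measurable.ite (measurable_snd (measurableSet_singleton g)) measurable_fst measurable_const
    have hindep2 : IndepFun (fun ω => if G ω = g then V ω else 0) (fun ω => φ (Z ω)) μ :=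
      hVG.comp hF (measurable_of_countable φ)
    have hA : AEStronglyMeasurable (fun ω => if G ω = g then V ω else 0) μ :=
      (Measurable.ite hs hVm measurable_const).aestronglyMeasurable
    have := hindep2.integral_mul_eq_mul_integral hA (hφm φ).aestronglyMeasurable
    have heq : (∫ ω, (if G ω = g then V ω else 0) * φ (Z ω) ∂μ) =
        (∫ ω, (if G ω = g then V ω else 0) ∂μ) * ∫ ω, φ (Z ω) ∂μ := this
    rw [heq]
    congr 1
    rw [← integral_indicator hs]
    congr 1
  -- independence instances
  have hVG1 : IndepFun (fun ω => (Y1 ω, G ω)) Z μ :=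
    hindep.comp (measurable_fst.prodMk (measurable_snd.snd)) measurable_id
  have hVG0 : IndepFun (fun ω => (Y0 ω, G ω)) Z μ :=
    hindep.comp (measurable_snd) measurable_id
  -- pointwise decompositions
  set f1 : γ → Ω → ℝ := fun g ω => (if G ω = g then Y1 ω else 0) * (Dg g (Z ω) * h (Z ω)) with hf1
  set f2 : γ → Ω → ℝ := fun g ω =>
    (if G ω = g then Y0 ω else 0) * ((1 - Dg g (Z ω)) * h (Z ω)) with hf2
  have e1 : ∀ ω, (Dg (G ω) (Z ω) * Y1 ω + (1 - Dg (G ω) (Z ω)) * Y0 ω) *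
      Dg (G ω) (Z ω) * h (Z ω) = ∑ g, f1 g ω := by
    intro ω
    have hsum : ∑ g, f1 g ω = Y1 ω * (Dg (G ω) (Z ω) * h (Z ω)) := by
      rw [hf1]
      simp only [ite_mul, zero_mul]
      rw [Finset.sum_ite_eq]
      simp
    rw [hsum]
    rcases hDg01 (G ω) (Z ω) with hd | hd <;> rw [hd] <;> ring
  have e2 : ∀ ω, (Dg (G ω) (Z ω) * Y1 ω + (1 - Dg (G ω) (Z ω)) * Y0 ω) *
      (1 - Dg (G ω) (Z ω)) * h (Z ω) = ∑ g, f2 g ω := by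
    intro ω
    have hsum : ∑ g, f2 g ω = Y0 ω * ((1 - Dg (G ω) (Z ω)) * h (Z ω)) := by
      rw [hf2]
      simp only [ite_mul, zero_mul]
      rw [Finset.sum_ite_eq]
      simp
    rw [hsum]
    rcases hDg01 (G ω) (Z ω) with hd | hd <;> rw [hd] <;> ring
  -- integrability of f1 g and f2 g
  have hIV : ∀ (V : Ω → ℝ), Measurable V → Integrable V μ → ∀ g : γ,
      Integrable (fun ω => if G ω = g then V ω else 0) μ := by
    intro V hVm hVi g
    have hs : MeasurableSet {ω | G ω = g} := hGm (measurableSet_singleton g)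
    have := hVi.indicator hs
    exact this.congr (ae_of_all _ fun ω => by simp [Set.indicator_apply])
  have hi1 : ∀ g, Integrable (f1 g) μ := fun g =>
    hmul _ (hIV Y1 hY1m hY1i g) (fun z => Dg g z * h z)
  have hi2 : ∀ g, Integrable (f2 g) μ := fun g =>
    hmul _ (hIV Y0 hY0m hY0i g) (fun z => (1 - Dg g z) * h z)
  -- integral of f1 g
  have I1 : ∀ g, ∫ ω, f1 g ω ∂μ =
      (∫ ω in {ω | G ω = g}, Y1 ω ∂μ) * ∫ ω, Dg g (Z ω) * h (Z ω) ∂μ :=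
    fun g => key Y1 hY1m hY1i hVG1 (fun z => Dg g z * h z) g
  -- integral of f2 g
  have I2 : ∀ g, ∫ ω, f2 g ω ∂μ =
      -((∫ ω in {ω | G ω = g}, Y0 ω ∂μ) * ∫ ω, Dg g (Z ω) * h (Z ω) ∂μ) := by
    intro g
    have hkey := key Y0 hY0m hY0i hVG0 (fun z => (1 - Dg g z) * h z) g
    have hphi : ∫ ω, (1 - Dg g (Z ω)) * h (Z ω) ∂μ = -∫ ω, Dg g (Z ω) * h (Z ω) ∂μ := by
      have : (fun ω => (1 - Dg g (Z ω)) * h (Z ω)) =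
          fun ω => h (Z ω) - Dg g (Z ω) * h (Z ω) := by
        funext ω; ring
      rw [this, integral_sub (hφi h) (hφi (fun z => Dg g z * h z)), hmean, zero_sub]
    rw [hkey, hphi]
    ring
  -- main integral decompositions
  have main1 : ∫ ω, (Dg (G ω) (Z ω) * Y1 ω + (1 - Dg (G ω) (Z ω)) * Y0 ω) *
      Dg (G ω) (Z ω) * h (Z ω) ∂μ =
      ∑ g, (∫ ω in {ω | G ω = g}, Y1 ω ∂μ) * ∫ ω, Dg g (Z ω) * h (Z ω) ∂μ := by
    simp_rw [e1]
    rw [integral_finset_sum _ (fun g _ => hi1 g)]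
    exact Finset.sum_congr rfl fun g _ => I1 g
  have main2 : ∫ ω, (Dg (G ω) (Z ω) * Y1 ω + (1 - Dg (G ω) (Z ω)) * Y0 ω) *
      (1 - Dg (G ω) (Z ω)) * h (Z ω) ∂μ =
      -∑ g, (∫ ω in {ω | G ω = g}, Y0 ω ∂μ) * ∫ ω, Dg g (Z ω) * h (Z ω) ∂μ := by
    simp_rw [e2]
    rw [integral_finset_sum _ (fun g _ => hi2 g)]
    rw [← Finset.sum_neg_distrib]
    exact Finset.sum_congr rfl fun g _ => I2 g
  refine ⟨main1, main2, ?_⟩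
  have e3 : ∀ ω, (Dg (G ω) (Z ω) * Y1 ω + (1 - Dg (G ω) (Z ω)) * Y0 ω) * h (Z ω) =
      (∑ g, f1 g ω) + (∑ g, f2 g ω) := by
    intro ω
    rw [← e1 ω, ← e2 ω]
    ring
  have hI1s : Integrable (fun ω => ∑ g, f1 g ω) μ := integrable_finset_sum _ (fun g _ => hi1 g)
  have hI2s : Integrable (fun ω => ∑ g, f2 g ω) μ := integrable_finset_sum _ (fun g _ => hi2 g)
  calc ∫ ω, (Dg (G ω) (Z ω) * Y1 ω + (1 - Dg (G ω) (Z ω)) * Y0 ω) * h (Z ω) ∂μ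
      = ∫ ω, ((∑ g, f1 g ω) + (∑ g, f2 g ω)) ∂μ := by simp_rw [e3]
    _ = (∫ ω, ∑ g, f1 g ω ∂μ) + ∫ ω, ∑ g, f2 g ω ∂μ := integral_add hI1s hI2s
    _ = (∑ g, ∫ ω, f1 g ω ∂μ) + ∑ g, ∫ ω, f2 g ω ∂μ := by
        rw [integral_finset_sum _ (fun g _ => hi1 g), integral_finset_sum _ (fun g _ => hi2 g)]
    _ = ∑ g, (∫ ω, Dg g (Z ω) * h (Z ω) ∂μ) * ∫ ω in {ω | G ω = g}, (Y1 ω - Y0 ω) ∂μ := by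
        rw [← Finset.sum_add_distrib]
        refine Finset.sum_congr rfl fun g _ => ?_
        rw [I1 g, I2 g]
        have hs : MeasurableSet {ω | G ω = g} := hGm (measurableSet_singleton g)
        rw [integral_sub (hY1i.integrableOn) (hY0i.integrableOn)]
        ring
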